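/- Let S be a commutative ring and A a commutative Hopf algebra over S that is free of rank 2 as an S-module. Suppose t ∈ A lies in the kernel of the counit and {1, t} is an S-basis of A. Then there exist unique elements f, g ∈ S such that t² = f·t and the comultiplication satisfies Δ(t) = t⊗1 + 1⊗t − g·(t⊗t); moreover f·g = 2. -/

import Mathlib

open TensorProduct

/-- **Normal form for Hopf algebras of rank 2.** Let `A` be a commutative Hopf algebra over
a commutative ring `S`, free of rank `2` as an `S`-module with basis `{1, t}` where `t`
lies in the kernel of the counit. Then there are unique `f, g ∈ S` with `t² = f·t` and
`Δ(t) = t⊗1 + 1⊗t − g·(t⊗t)`, and they satisfy `f·g = 2`. -/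
theorem rank_two_hopf_algebra_normal_form
    {S A : Type*} [CommRing S] [CommRing A] [HopfAlgebra S A]
    (t : A) (b : Module.Basis (Fin 2) S A) (hb0 : b 0 = 1) (hb1 : b 1 = t)
    (ht : Coalgebra.counit (R := S) t = 0) :
    ∃ f g : S,
      (t ^ 2 = f • t) ∧
      (Coalgebra.comul (R := S) t =
        t ⊗ₜ[S] (1 : A) + (1 : A) ⊗ₜ[S] t - g • (t ⊗ₜ[S] t)) ∧
      f * g = 2 ∧
      ∀ f' g' : S, t ^ 2 = f' • t →
        Coalgebra.comul (R := S) t =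
          t ⊗ₜ[S] (1 : A) + (1 : A) ⊗ₜ[S] t - g' • (t ⊗ₜ[S] t) →
        f' = f ∧ g' = g := by
  classical
  have hrepr1 : ∀ x : A, x = b.repr x 0 • (1:A) + b.repr x 1 • t := by
    intro x
    conv_lhs => rw [← b.sum_repr x]
    rw [Fin.sum_univ_two, hb0, hb1]
  have hAext : ∀ x y x' y' : S, x • (1:A) + y • t = x' • (1:A) + y' • t → x = x' ∧ y = y' := by
    intro x y x' y' h
    rw [← hb0, ← hb1] at h
    have h0 := congrArg (fun z => b.repr z 0) h
    have h1 := congrArg (fun z => b.repr z 1) h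
    simp [Finsupp.single_apply] at h0 h1
    exact ⟨h0, h1⟩
  -- t^2 = f • t
  set f : S := b.repr (t^2) 1 with hfdef
  have ht2 : t ^ 2 = f • t := by
    have h0 : b.repr (t^2) 0 = 0 := by
      have h := congrArg (Coalgebra.counit (R := S)) (hrepr1 (t^2))
      rw [Bialgebra.counit_pow, ht, zero_pow two_ne_zero, map_add, map_smul, map_smul,
        Bialgebra.counit_one, ht, smul_zero, add_zero, smul_eq_mul, mul_one] at h
      exact h.symm
    conv_lhs => rw [hrepr1 (t^2)]
    rw [h0, zero_smul, zero_add]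
  have htt : t * t = f • t := by rw [← pow_two, ht2]
  -- tensor basis
  set B : Module.Basis (Fin 2 × Fin 2) S (A ⊗[S] A) := b.tensorProduct b with hBdef
  have rb1 : b.repr 1 = Finsupp.single 0 1 := by rw [← hb0]; exact b.repr_self 0
  have rbt : b.repr t = Finsupp.single 1 1 := by rw [← hb1]; exact b.repr_self 1
  have hreprT : ∀ z : A ⊗[S] A, z =
      B.repr z (0,0) • ((1:A) ⊗ₜ[S] (1:A)) + B.repr z (0,1) • ((1:A) ⊗ₜ[S] t)
      + B.repr z (1,0) • (t ⊗ₜ[S] (1:A)) + B.repr z (1,1) • (t ⊗ₜ[S] t) := by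
    intro z
    conv_lhs => rw [← B.sum_repr z]
    rw [Fintype.sum_prod_type, Fin.sum_univ_two, Fin.sum_univ_two, Fin.sum_univ_two]
    simp only [hBdef, Module.Basis.tensorProduct_apply, hb0, hb1]
    abel
  -- comultiplication normal form
  set cΔ : Fin 2 × Fin 2 → S := fun p => B.repr (Coalgebra.comul (R := S) t) p with hcΔdef
  have hΔ0 : Coalgebra.comul (R := S) t =
      cΔ (0,0) • ((1:A) ⊗ₜ[S] (1:A)) + cΔ (0,1) • ((1:A) ⊗ₜ[S] t)
      + cΔ (1,0) • (t ⊗ₜ[S] (1:A)) + cΔ (1,1) • (t ⊗ₜ[S] t) := hreprT _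
  have hL : cΔ (0,0) • (1:A) + cΔ (0,1) • t = (0:S) • (1:A) + (1:S) • t := by
    have h := Coalgebra.rTensor_counit_comul (R := S) t
    rw [hΔ0] at h
    apply_fun TensorProduct.lid S A at h
    simp only [map_add, map_smul, LinearMap.rTensor_tmul, Bialgebra.counit_one, ht,
      TensorProduct.zero_tmul, smul_zero, lid_tmul, one_smul, zero_smul, add_zero] at h
    rw [zero_smul, zero_add, one_smul]
    exact h
  have hR : cΔ (0,0) • (1:A) + cΔ (1,0) • t = (0:S) • (1:A) + (1:S) • t := by
    have h := Coalgebra.lTensor_counit_comul (R := S) t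
    rw [hΔ0] at h
    apply_fun TensorProduct.rid S A at h
    simp only [map_add, map_smul, LinearMap.lTensor_tmul, Bialgebra.counit_one, ht,
      TensorProduct.tmul_zero, smul_zero, rid_tmul, one_smul, zero_smul, add_zero] at h
    rw [zero_smul, zero_add, one_smul]
    exact h
  obtain ⟨hc00, hc01⟩ := hAext _ _ _ _ hL
  obtain ⟨-, hc10⟩ := hAext _ _ _ _ hR
  set g : S := -(cΔ (1,1)) with hgdef
  have hΔ : Coalgebra.comul (R := S) t =
      t ⊗ₜ[S] (1 : A) + (1 : A) ⊗ₜ[S] t - g • (t ⊗ₜ[S] t) := by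
    rw [hΔ0, hc00, hc01, hc10, hgdef]
    module
  -- quadratic relation from multiplicativity of comul
  have hcm : Coalgebra.comul (R := S) t * Coalgebra.comul (R := S) t
      = f • Coalgebra.comul (R := S) t := by
    rw [← Bialgebra.comul_mul, htt, map_smul]
  rw [hΔ] at hcm
  have h11 := congrArg (fun z => B.repr z (1,1)) hcm
  simp only [sub_mul, mul_sub, add_mul, mul_add, Algebra.TensorProduct.tmul_mul_tmul,
    smul_mul_assoc, mul_smul_comm, mul_one, one_mul, htt, TensorProduct.smul_tmul',
    TensorProduct.tmul_smul, smul_smul, smul_sub, smul_add,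
    map_add, map_sub, map_smul, hBdef, Module.Basis.tensorProduct_repr_tmul_apply,
    rb1, rbt, Finsupp.smul_apply, Finsupp.sub_apply, Finsupp.add_apply,
    Finsupp.single_apply, smul_eq_mul] at h11
  have hquad : f*f*(g*g) - 3*(f*g) + 2 = 0 := by
    norm_num at h11
    linear_combination h11
  -- antipode relation
  have hσ1 : HopfAlgebra.antipode (R := S) (1 : A) = 1 := by
    have h := HopfAlgebra.mul_antipode_rTensor_comul_apply (R := S) (1 : A)
    simpa [Bialgebra.comul_one, Algebra.TensorProduct.one_def] using h
  set c : S := b.repr (HopfAlgebra.antipode (R := S) t) 0 with hcdef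
  set d : S := b.repr (HopfAlgebra.antipode (R := S) t) 1 with hddef
  have hσt : HopfAlgebra.antipode (R := S) t = c • (1:A) + d • t := hrepr1 _
  have hσ := HopfAlgebra.mul_antipode_rTensor_comul_apply (R := S) t
  rw [hΔ, ht, map_zero] at hσ
  simp only [map_sub, map_add, map_smul, LinearMap.rTensor_tmul, LinearMap.mul'_apply,
    hσ1, hσt, mul_one, one_mul] at hσ
  have h2 : c • (1:A) + (d + 1 - (g*c + g*(d*f))) • t = (0:S) • (1:A) + (0:S) • t := by
    rw [zero_smul, zero_smul, add_zero, ← hσ, add_mul, smul_mul_assoc, smul_mul_assoc,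
      one_mul, htt]
    module
  obtain ⟨hc0, hd0⟩ := hAext _ _ _ _ h2
  have hd : d * (f * g) = d + 1 := by
    rw [hc0] at hd0; linear_combination -hd0
  -- conclusion
  refine ⟨f, g, ht2, hΔ, ?_, ?_⟩
  · linear_combination d * hquad - (f * g - 2) * hd
  · intro f' g' hf' hg'
    constructor
    · have h : (0:S) • (1:A) + f' • t = (0:S) • (1:A) + f • t := by
        rw [zero_smul, zero_add, zero_add, ← hf', ← ht2]
      exact (hAext _ _ _ _ h).2
    · have h : g' • (t ⊗ₜ[S] t) = g • (t ⊗ₜ[S] t) := by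
        have := hg'.symm.trans hΔ
        exact sub_right_inj.mp this
      have h' := congrArg (fun z => B.repr z (1,1)) h
      simp only [hBdef, map_smul, Finsupp.smul_apply, Module.Basis.tensorProduct_repr_tmul_apply,
        rbt, Finsupp.single_eq_same, mul_one, smul_eq_mul] at h'
      exact h'
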